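/- The map f ⊗ r ⊗ g ↦ (f·∂_s(−r·(s·ρ)) ⊗ g, f·∂_s(r) ⊗ g) is an isomorphism of R-bimodules R ⊗_{R^s} R ⊗_{R^s} R ≅ (R ⊗_{R^s} R) ⊕ (R ⊗_{R^s} R), where in the first summand the right-hand tensor factor is paired via f·∂_s(−r·(s·ρ)) ⊗ g ∈ R ⊗_{R^s} R and in the second via f·∂_s(r) ⊗ g ∈ R ⊗_{R^s} R (this realizes the splitting B_sB_s ≅ B_s(1) ⊕ B_s(−1) of Soergel bimodules, forgetting grading shifts). -/

import Mathlib

open MvPolynomial TensorProduct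

set_option synthInstance.maxHeartbeats 1000000
set_option maxHeartbeats 1000000

/-- The polynomial on `V = Fin n → ℝ` representing the linear form with coefficient
vector `g`, i.e. `v ↦ ∑ i, g i * v i`. -/
noncomputable def linForm (n : ℕ) (g : Fin n → ℝ) : MvPolynomial (Fin n) ℝ :=
  ∑ i, MvPolynomial.C (g i) * MvPolynomial.X i

/-- The algebra automorphism of `R = ℝ[X₁,…,Xₙ]` (polynomial functions on `V = Fin n → ℝ`)
given by `(s·f)(v) = f (s v)` for the reflection `s(v) = v - ⟨α_s, v⟩ α_s^∨`, where the
linear form `α_s` has coefficient vector `a` and the vector `α_s^∨` has coordinates `c`. -/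
noncomputable def reflAct (n : ℕ) (a c : Fin n → ℝ) :
    MvPolynomial (Fin n) ℝ →ₐ[ℝ] MvPolynomial (Fin n) ℝ :=
  MvPolynomial.aeval fun j => MvPolynomial.X j - MvPolynomial.C (c j) * linForm n a

/-- The subalgebra `Rˢ ⊆ R` of `s`-invariant polynomials. -/
noncomputable def invariants (n : ℕ) (a c : Fin n → ℝ) :
    Subalgebra ℝ (MvPolynomial (Fin n) ℝ) :=
  AlgHom.equalizer (reflAct n a c) (AlgHom.id ℝ (MvPolynomial (Fin n) ℝ))

namespace MTS
variable {n : ℕ} {a c rv : Fin n → ℝ}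
section PREV
lemma reflAct_X (j : Fin n) :
    reflAct n a c (X j) = X j - C (c j) * linForm n a := by
  simp [reflAct]
lemma reflAct_linForm (g : Fin n → ℝ) :
    reflAct n a c (linForm n g) = linForm n g - C (∑ i, g i * c i) * linForm n a := by
  have h : (C (∑ i, g i * c i) : MvPolynomial (Fin n) ℝ) = ∑ i, C (g i) * C (c i) := by
    rw [map_sum]; simp [map_mul]
  rw [h]
  simp only [linForm, reflAct, map_sum, map_mul, aeval_C, aeval_X, mul_sub, algebraMap_eq]
  rw [Finset.sum_sub_distrib, Finset.sum_mul]
  congr 1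
  exact Finset.sum_congr rfl fun i _ => by ring
lemma linForm_ne_zero (hac : ∑ i, a i * c i = 2) : linForm n a ≠ 0 := by
  intro h
  have h2 : eval c (linForm n a) = ∑ i, a i * c i := by simp [linForm]
  rw [h, map_zero] at h2
  rw [← h2] at hac
  norm_num at hac
lemma reflAct_alpha (hac : ∑ i, a i * c i = 2) :
    reflAct n a c (linForm n a) = -linForm n a := by
  rw [reflAct_linForm, hac]; ring_nf; rw [map_ofNat]; ring
lemma reflAct_rho (hrc : ∑ i, rv i * c i = 1) :
    reflAct n a c (linForm n rv) = linForm n rv - linForm n a := by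
  rw [reflAct_linForm, hrc]; simp
lemma reflAct_reflAct (hac : ∑ i, a i * c i = 2) (f : MvPolynomial (Fin n) ℝ) :
    reflAct n a c (reflAct n a c f) = f := by
  have : (reflAct n a c).comp (reflAct n a c) = AlgHom.id ℝ _ := by
    apply MvPolynomial.algHom_ext
    intro j
    simp only [AlgHom.comp_apply, AlgHom.id_apply, reflAct_X, map_sub, map_mul]
    rw [show reflAct n a c (C (c j)) = C (c j) from by simp [reflAct],
      reflAct_alpha hac]
    ring
  calc reflAct n a c (reflAct n a c f) = ((reflAct n a c).comp (reflAct n a c)) f := rfl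
    _ = f := by rw [this]; rfl
lemma dvd_sub_reflAct (a c : Fin n → ℝ) (f : MvPolynomial (Fin n) ℝ) :
    linForm n a ∣ f - reflAct n a c f := by
  induction f using MvPolynomial.induction_on with
  | C r => simp [reflAct]
  | add f g hf hg =>
      rw [map_add]
      have := dvd_add hf hg
      convert this using 1
      ring
  | mul_X f i hf =>
      obtain ⟨k, hk⟩ := hf
      refine ⟨k * X i + C (c i) * reflAct n a c f, ?_⟩
      rw [map_mul, reflAct_X]
      linear_combination (X i : MvPolynomial (Fin n) ℝ) * hk
end PREV

/-- The Demazure operator. -/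
noncomputable def dem (a c : Fin n → ℝ) (f : MvPolynomial (Fin n) ℝ) :
    MvPolynomial (Fin n) ℝ :=
  (dvd_sub_reflAct a c f).choose

lemma dem_spec (a c : Fin n → ℝ) (f : MvPolynomial (Fin n) ℝ) :
    f - reflAct n a c f = linForm n a * dem a c f :=
  (dvd_sub_reflAct a c f).choose_spec

lemma dem_eq (hac : ∑ i, a i * c i = 2) {f d : MvPolynomial (Fin n) ℝ}
    (h : linForm n a * d = f - reflAct n a c f) : dem a c f = d :=
  mul_left_cancel₀ (linForm_ne_zero hac) (by rw [← dem_spec, h])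

lemma dem_one (hac : ∑ i, a i * c i = 2) : dem a c (1 : MvPolynomial (Fin n) ℝ) = 0 :=
  dem_eq hac (by simp)

lemma dem_rho (hac : ∑ i, a i * c i = 2) (hrc : ∑ i, rv i * c i = 1) :
    dem a c (linForm n rv) = 1 :=
  dem_eq hac (by rw [reflAct_rho hrc]; ring)

lemma dem_add (hac : ∑ i, a i * c i = 2) (f g : MvPolynomial (Fin n) ℝ) :
    dem a c (f + g) = dem a c f + dem a c g :=
  dem_eq hac (by rw [map_add, mul_add, ← dem_spec, ← dem_spec]; ring)

lemma dem_invariant_mul (hac : ∑ i, a i * c i = 2) {u : MvPolynomial (Fin n) ℝ}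
    (hu : reflAct n a c u = u) (f : MvPolynomial (Fin n) ℝ) :
    dem a c (u * f) = u * dem a c f :=
  dem_eq hac (by rw [map_mul, hu]; linear_combination (-u) * dem_spec a c f)

lemma reflAct_dem (hac : ∑ i, a i * c i = 2) (f : MvPolynomial (Fin n) ℝ) :
    reflAct n a c (dem a c f) = dem a c f := by
  apply mul_left_cancel₀ (linForm_ne_zero hac)
  have h1 : linForm n a * reflAct n a c (dem a c f)
      = -(reflAct n a c (linForm n a * dem a c f)) := by
    rw [map_mul, reflAct_alpha hac]; ring
  rw [h1, ← dem_spec, map_sub, reflAct_reflAct hac]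
  ring

/-- The "constant term" part `c₀ f = f - ∂f·ρ`. -/
noncomputable def czero (a c rv : Fin n → ℝ) (f : MvPolynomial (Fin n) ℝ) :
    MvPolynomial (Fin n) ℝ :=
  f - dem a c f * linForm n rv

lemma reflAct_czero (hac : ∑ i, a i * c i = 2) (hrc : ∑ i, rv i * c i = 1)
    (f : MvPolynomial (Fin n) ℝ) :
    reflAct n a c (czero a c rv f) = czero a c rv f := by
  rw [czero, map_sub, map_mul, reflAct_dem hac, reflAct_rho hrc]
  have := dem_spec a c f
  linear_combination -this

lemma czero_one (hac : ∑ i, a i * c i = 2) :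
    czero a c rv (1 : MvPolynomial (Fin n) ℝ) = 1 := by
  rw [czero, dem_one hac]; ring

lemma czero_rho (hac : ∑ i, a i * c i = 2) (hrc : ∑ i, rv i * c i = 1) :
    czero a c rv (linForm n rv) = 0 := by
  rw [czero, dem_rho hac hrc]; ring

lemma czero_add (hac : ∑ i, a i * c i = 2) (f g : MvPolynomial (Fin n) ℝ) :
    czero a c rv (f + g) = czero a c rv f + czero a c rv g := by
  simp only [czero, dem_add hac]; ring

lemma czero_invariant_mul (hac : ∑ i, a i * c i = 2) {u : MvPolynomial (Fin n) ℝ}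
    (hu : reflAct n a c u = u) (f : MvPolynomial (Fin n) ℝ) :
    czero a c rv (u * f) = u * czero a c rv f := by
  simp only [czero, dem_invariant_mul hac hu]; ring

lemma czero_add_dem_mul (f : MvPolynomial (Fin n) ℝ) :
    czero a c rv f + dem a c f * linForm n rv = f := by
  rw [czero]; ring

/-- The defining identity for `d₁`. -/
lemma czero_char (hac : ∑ i, a i * c i = 2) (hrc : ∑ i, rv i * c i = 1)
    (r : MvPolynomial (Fin n) ℝ) :
    linForm n a * czero a c rv r =
      (-(r * reflAct n a c (linForm n rv))) -
        reflAct n a c (-(r * reflAct n a c (linForm n rv))) := by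
  rw [czero, map_neg, map_mul, reflAct_reflAct hac, reflAct_rho hrc]
  have hd := dem_spec a c r
  linear_combination (linForm n rv) * hd


section Maps

variable (n a c rv)
variable (hac : ∑ i, a i * c i = 2) (hrc : ∑ i, rv i * c i = 1)

lemma czero_mem (hac : ∑ i, a i * c i = 2) (hrc : ∑ i, rv i * c i = 1)
    (r : MvPolynomial (Fin n) ℝ) :
    czero a c rv r ∈ invariants n a c :=
  AlgHom.mem_equalizer _ _ _ |>.mpr (reflAct_czero hac hrc r)

lemma dem_mem (hac : ∑ i, a i * c i = 2) (r : MvPolynomial (Fin n) ℝ) :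
    dem a c r ∈ invariants n a c :=
  AlgHom.mem_equalizer _ _ _ |>.mpr (reflAct_dem hac r)

lemma inv_smul_eq (u : invariants n a c) (x : MvPolynomial (Fin n) ℝ) :
    u • x = (u : MvPolynomial (Fin n) ℝ) * x := rfl

/-- The bilinear map `(r, g) ↦ (c₀(r) ⊗ g, ∂(r) ⊗ g)`. -/
noncomputable def bil :
    MvPolynomial (Fin n) ℝ →ₗ[invariants n a c] MvPolynomial (Fin n) ℝ
      →ₗ[invariants n a c]
      ((MvPolynomial (Fin n) ℝ ⊗[invariants n a c] MvPolynomial (Fin n) ℝ) ×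
        (MvPolynomial (Fin n) ℝ ⊗[invariants n a c] MvPolynomial (Fin n) ℝ)) :=
  LinearMap.mk₂ (invariants n a c)
    (fun r g => ((czero a c rv r) ⊗ₜ g, (dem a c r) ⊗ₜ g))
    (fun r r' g => by simp [czero_add hac, dem_add hac, add_tmul, Prod.mk_add_mk])
    (fun u r g => by
      have hu : reflAct n a c (u : MvPolynomial (Fin n) ℝ) = u := u.2
      simp only [inv_smul_eq, czero_invariant_mul hac hu, dem_invariant_mul hac hu,
        Prod.smul_mk, smul_tmul']
      rfl)
    (fun r g g' => by simp [tmul_add, Prod.mk_add_mk])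
    (fun u r g => by simp only [Prod.smul_mk, tmul_smul]; rfl)

/-- Forward map. -/
noncomputable def phi :
    (MvPolynomial (Fin n) ℝ ⊗[invariants n a c]
        (MvPolynomial (Fin n) ℝ ⊗[invariants n a c] MvPolynomial (Fin n) ℝ))
      →ₗ[MvPolynomial (Fin n) ℝ]
      ((MvPolynomial (Fin n) ℝ ⊗[invariants n a c] MvPolynomial (Fin n) ℝ) ×
        (MvPolynomial (Fin n) ℝ ⊗[invariants n a c] MvPolynomial (Fin n) ℝ)) :=
  (TensorProduct.lift (bil n a c rv hac)).liftBaseChange (MvPolynomial (Fin n) ℝ)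

/-- First component of the inverse. -/
noncomputable def psi0 :
    (MvPolynomial (Fin n) ℝ ⊗[invariants n a c] MvPolynomial (Fin n) ℝ)
      →ₗ[MvPolynomial (Fin n) ℝ]
      (MvPolynomial (Fin n) ℝ ⊗[invariants n a c]
        (MvPolynomial (Fin n) ℝ ⊗[invariants n a c] MvPolynomial (Fin n) ℝ)) :=
  (((TensorProduct.mk (invariants n a c) (MvPolynomial (Fin n) ℝ)
      (MvPolynomial (Fin n) ℝ ⊗[invariants n a c] MvPolynomial (Fin n) ℝ)) 1) ∘ₗ
    ((TensorProduct.mk (invariants n a c) (MvPolynomial (Fin n) ℝ)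
      (MvPolynomial (Fin n) ℝ)) 1)).liftBaseChange (MvPolynomial (Fin n) ℝ)

/-- Second component of the inverse. -/
noncomputable def psi1 :
    (MvPolynomial (Fin n) ℝ ⊗[invariants n a c] MvPolynomial (Fin n) ℝ)
      →ₗ[MvPolynomial (Fin n) ℝ]
      (MvPolynomial (Fin n) ℝ ⊗[invariants n a c]
        (MvPolynomial (Fin n) ℝ ⊗[invariants n a c] MvPolynomial (Fin n) ℝ)) :=
  (((TensorProduct.mk (invariants n a c) (MvPolynomial (Fin n) ℝ)
      (MvPolynomial (Fin n) ℝ ⊗[invariants n a c] MvPolynomial (Fin n) ℝ)) 1) ∘ₗ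
    ((TensorProduct.mk (invariants n a c) (MvPolynomial (Fin n) ℝ)
      (MvPolynomial (Fin n) ℝ)) (linForm n rv))).liftBaseChange (MvPolynomial (Fin n) ℝ)

lemma phi_tmul (f r g : MvPolynomial (Fin n) ℝ) :
    phi n a c rv hac (f ⊗ₜ (r ⊗ₜ g)) =
      ((f * czero a c rv r) ⊗ₜ g, (f * dem a c r) ⊗ₜ g) := by
  simp only [phi, LinearMap.liftBaseChange_tmul, TensorProduct.lift.tmul, bil,
    LinearMap.mk₂_apply, Prod.smul_mk, smul_tmul', smul_eq_mul]
  rfl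

lemma psi0_tmul (p q : MvPolynomial (Fin n) ℝ) :
    psi0 n a c (p ⊗ₜ q) = p ⊗ₜ ((1 : MvPolynomial (Fin n) ℝ) ⊗ₜ q) := by
  simp only [psi0, LinearMap.liftBaseChange_tmul, LinearMap.comp_apply, mk_apply,
    smul_tmul', smul_eq_mul, mul_one]
  erw [LinearMap.comp_apply, mk_apply, mk_apply, smul_tmul', smul_eq_mul, mul_one]

lemma psi1_tmul (p q : MvPolynomial (Fin n) ℝ) :
    psi1 n a c rv (p ⊗ₜ q) = p ⊗ₜ ((linForm n rv) ⊗ₜ q) := by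
  simp only [psi1, LinearMap.liftBaseChange_tmul, LinearMap.comp_apply, mk_apply,
    smul_tmul', smul_eq_mul, mul_one]
  erw [LinearMap.comp_apply, mk_apply, mk_apply, smul_tmul', smul_eq_mul, mul_one]

lemma phipsi0 (p q : MvPolynomial (Fin n) ℝ) :
    phi n a c rv hac (psi0 n a c (p ⊗ₜ q)) = (p ⊗ₜ q, 0) := by
  rw [psi0_tmul, phi_tmul, czero_one hac, dem_one hac, mul_one, mul_zero]
  rw [TensorProduct.zero_tmul]

lemma phipsi1 (hrc : ∑ i, rv i * c i = 1) (p q : MvPolynomial (Fin n) ℝ) :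
    phi n a c rv hac (psi1 n a c rv (p ⊗ₜ q)) = (0, p ⊗ₜ q) := by
  rw [psi1_tmul, phi_tmul, czero_rho hac hrc, dem_rho hac hrc, mul_one, mul_zero]
  rw [TensorProduct.zero_tmul]

lemma psiphi (hrc : ∑ i, rv i * c i = 1) (f r g : MvPolynomial (Fin n) ℝ) :
    ((psi0 n a c).coprod (psi1 n a c rv)) (phi n a c rv hac (f ⊗ₜ (r ⊗ₜ g)))
      = f ⊗ₜ (r ⊗ₜ g) := by
  rw [phi_tmul, LinearMap.coprod_apply, psi0_tmul, psi1_tmul]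
  have h0 : (f * czero a c rv r) ⊗ₜ[invariants n a c]
        ((1 : MvPolynomial (Fin n) ℝ) ⊗ₜ[invariants n a c] g)
      = f ⊗ₜ[invariants n a c] ((czero a c rv r) ⊗ₜ[invariants n a c] g) := by
    have e1 : f * czero a c rv r
        = (⟨czero a c rv r, czero_mem n a c rv hac hrc r⟩ : invariants n a c) • f := by
      rw [inv_smul_eq]; ring
    rw [e1, smul_tmul]; erw [smul_tmul']; rw [inv_smul_eq, mul_one]
  have h1 : (f * dem a c r) ⊗ₜ[invariants n a c]
        ((linForm n rv) ⊗ₜ[invariants n a c] g)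
      = f ⊗ₜ[invariants n a c] ((dem a c r * linForm n rv) ⊗ₜ[invariants n a c] g) := by
    have e1 : f * dem a c r
        = (⟨dem a c r, dem_mem n a c hac r⟩ : invariants n a c) • f := by
      rw [inv_smul_eq]; ring
    rw [e1, smul_tmul]; erw [smul_tmul']; rw [inv_smul_eq]
  rw [h0, h1, ← TensorProduct.tmul_add, ← TensorProduct.add_tmul, czero_add_dem_mul]

end Maps

end MTS

/-- The map `f ⊗ r ⊗ g ↦ (f·∂ₛ(-r·(s·ρ)) ⊗ g, f·∂ₛ(r) ⊗ g)` is an isomorphism of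
`R`-bimodules `R ⊗_{Rˢ} R ⊗_{Rˢ} R ≅ (R ⊗_{Rˢ} R) ⊕ (R ⊗_{Rˢ} R)` (realizing the splitting
`BₛBₛ ≅ Bₛ(1) ⊕ Bₛ(-1)`, forgetting grading shifts).  Here `ρ = linForm n r` has
`⟨ρ, αₛ^∨⟩ = 1` and the Demazure values `∂ₛ(-r·(s·ρ))`, `∂ₛ(r)` are characterized as the
(unique) polynomials `d₁`, `d₂` with `αₛ·d₁ = (-r·(s·ρ)) - s·(-r·(s·ρ))` and
`αₛ·d₂ = r - s·r`. -/
theorem middle_tensor_splitting (n : ℕ) (a c rv : Fin n → ℝ)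
    (hac : ∑ i, a i * c i = 2) (hrc : ∑ i, rv i * c i = 1) :
    ∃ e : (MvPolynomial (Fin n) ℝ ⊗[invariants n a c]
            (MvPolynomial (Fin n) ℝ ⊗[invariants n a c] MvPolynomial (Fin n) ℝ))
          ≃ₗ[MvPolynomial (Fin n) ℝ]
          ((MvPolynomial (Fin n) ℝ ⊗[invariants n a c] MvPolynomial (Fin n) ℝ) ×
            (MvPolynomial (Fin n) ℝ ⊗[invariants n a c] MvPolynomial (Fin n) ℝ)),
      ∀ f r g d₁ d₂ : MvPolynomial (Fin n) ℝ,
        linForm n a * d₁ =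
          (-(r * reflAct n a c (linForm n rv))) -
            reflAct n a c (-(r * reflAct n a c (linForm n rv))) →
        linForm n a * d₂ = r - reflAct n a c r →
        e (f ⊗ₜ[invariants n a c] (r ⊗ₜ[invariants n a c] g)) =
          ((f * d₁) ⊗ₜ[invariants n a c] g, (f * d₂) ⊗ₜ[invariants n a c] g) := by
  refine ⟨LinearEquiv.ofLinear (MTS.phi n a c rv hac)
    ((MTS.psi0 n a c).coprod (MTS.psi1 n a c rv)) ?_ ?_, ?_⟩
  · ext p <;>
      simp [MTS.phipsi0 n a c rv hac, MTS.phipsi1 n a c rv hac hrc,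
        AlgebraTensorModule.curry_apply]
  · ext r g
    exact MTS.psiphi n a c rv hac hrc 1 r g
  · intro f r g d₁ d₂ h1 h2
    have hd2 : MTS.dem a c r = d₂ := MTS.dem_eq hac h2
    have hd1 : MTS.czero a c rv r = d₁ :=
      mul_left_cancel₀ (MTS.linForm_ne_zero hac)
        ((MTS.czero_char hac hrc r).trans h1.symm)
    simp [LinearEquiv.ofLinear_apply, MTS.phi_tmul, hd1, hd2]
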